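/- If R is a direct summand (as an R-module, via a splitting σ with σ(1)=1) of a k-algebra S, and S is D-simple (i.e., S is a simple module over its ring of k-linear differential operators), then R is D-simple. -/
import Mathlib


/-- `IsDiffOp k A m δ` : the `k`-linear endomorphism `δ` of `A` is a `k`-linear differential
operator of order `≤ m`, defined inductively. -/
def IsDiffOp (k : Type*) (A : Type*) [CommSemiring k] [CommRing A] [Algebra k A] :
    ℕ → (A →ₗ[k] A) → Prop
  | 0, δ => ∃ a : A, ∀ x : A, δ x = a * x
  | m + 1, δ => ∀ r : A,
      IsDiffOp k A m (δ ∘ₗ LinearMap.mulLeft k r - LinearMap.mulLeft k r ∘ₗ δ)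

/-- A `k`-algebra `A` is `D`-simple if every nonzero element of `A` can be sent to `1` by
some `k`-linear differential operator; equivalently `A` is a simple module over its ring of
differential operators. -/
def DSimple (k : Type*) (A : Type*) [CommSemiring k] [CommRing A] [Algebra k A] : Prop :=
  ∀ a : A, a ≠ 0 → ∃ (m : ℕ) (δ : A →ₗ[k] A), IsDiffOp k A m δ ∧ δ a = 1

/-- If `R` is a direct summand of a `k`-algebra `S` (via an `R`-linear splitting `σ` with
`σ 1 = 1`), and `S` is `D`-simple, then `R` is `D`-simple. -/
theorem dsimple_of_summand
    (k R S : Type*) [CommSemiring k] [CommRing R] [CommRing S]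
    [Algebra k R] [Algebra k S]
    (φ : R →ₐ[k] S) (hφ : Function.Injective φ)
    (σ : S →ₗ[k] R) (hσlin : ∀ (r : R) (s : S), σ (φ r * s) = r * σ s) (hσ1 : σ 1 = 1)
    (hS : DSimple k S) :
    DSimple k R := by
  have key : ∀ m (δ : S →ₗ[k] S), IsDiffOp k S m δ →
      IsDiffOp k R m (σ ∘ₗ δ ∘ₗ φ.toLinearMap) := by
    intro m
    induction m with
    | zero =>
      intro δ hδ
      obtain ⟨a, ha⟩ := hδ
      refine ⟨σ a, fun x => ?_⟩
      simp only [LinearMap.comp_apply, AlgHom.toLinearMap_apply, ha]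
      rw [mul_comm a (φ x), hσlin, mul_comm]
    | succ m ih =>
      intro δ hδ r0
      have h := ih _ (hδ (φ r0))
      have heq : (σ ∘ₗ δ ∘ₗ φ.toLinearMap) ∘ₗ LinearMap.mulLeft k r0 -
          LinearMap.mulLeft k r0 ∘ₗ (σ ∘ₗ δ ∘ₗ φ.toLinearMap) =
          σ ∘ₗ (δ ∘ₗ LinearMap.mulLeft k (φ r0) -
            LinearMap.mulLeft k (φ r0) ∘ₗ δ) ∘ₗ φ.toLinearMap := by
        ext x
        simp only [LinearMap.sub_apply, LinearMap.comp_apply, LinearMap.mulLeft_apply,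
          AlgHom.toLinearMap_apply, map_sub, map_mul, hσlin]
      rw [heq]
      exact h
  intro r hr
  have hr' : φ r ≠ 0 := fun h => hr (hφ (by simp [h]))
  obtain ⟨m, δ, hδ, h1⟩ := hS (φ r) hr'
  exact ⟨m, σ ∘ₗ δ ∘ₗ φ.toLinearMap, key m δ hδ, by simp [h1, hσ1]⟩
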